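/- Let A be a real n×n matrix, B a real n×1 matrix, C a real 1×n matrix, and φ : ℝ → ℝ Lipschitz continuous with constant L ≥ 0. Suppose there exist a real symmetric positive-definite n×n matrix P, μ > 0, and K ∈ ℝ such that P(A − BKC) + (A − BKC)ᵀP ≤ −μP and PB = Cᵀ. Let x : ℝ → ℝⁿ solve ẋ = A x + B φ(C x), and assume the master output y₁(t) = C x(t) is differentiable with |ẏ₁(t)| ≤ L_y for all t ≥ 0 and |y₁(0)| ≤ 2M, where the coder range M > 0 and sampling time T_s > 0 satisfy L_y·T_s ≤ M. Let the decoded signal ȳ₁ be produced by the first-order binary coder: c(0) = 0, c(k+1) = c(k) + M·sgn(y₁(k·T_s) − c(k)), and ȳ₁(t) = c(k) + M·sgn(y₁(k·T_s) − c(k)) for t ∈ [k·T_s, (k+1)·T_s). Let z : ℝ → ℝⁿ solve ż = A z + B φ(C z) + B u with u(t) = −(K + L)·(C z(t) − ȳ₁(t)). Then limsup_{t→∞} ‖z(t) − x(t)‖ ≤ 4M·(|K| + L)·√(Bᵀ P B) / (μ·√(λ_min(P))). In particular, choosing the minimal admissible range M = L_y·T_s = L_y/R, where R = 1/T_s is the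 channel transmission rate in bits per second, the bound equals 4(|K| + L)·√(Bᵀ P B)·L_y / (μ·√(λ_min(P))·R), i.e. the guaranteed limit synchronization error is proportional to the maximal rate L_y of the coupling signal and inversely proportional to the transmission rate R. -/

import Mathlib

open Matrix Filter

section Aux

lemma psd_sym {n : ℕ} {P : Matrix (Fin n) (Fin n) ℝ} (hP : P.IsHermitian)
    (a b : Fin n → ℝ) : a ⬝ᵥ P.mulVec b = b ⬝ᵥ P.mulVec a := by
  have hPt : Pᵀ = P := by
    rw [← conjTranspose_eq_transpose_of_trivial]; exact hP.eq
  conv_lhs => rw [dotProduct_mulVec, ← hPt, vecMul_transpose, dotProduct_comm]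

lemma psd_nonneg {n : ℕ} {P : Matrix (Fin n) (Fin n) ℝ} (hP : P.PosSemidef)
    (v : Fin n → ℝ) : 0 ≤ v ⬝ᵥ P.mulVec v := by simpa using hP.re_dotProduct_nonneg v

lemma psd_cs {n : ℕ} {P : Matrix (Fin n) (Fin n) ℝ} (hP : P.PosSemidef)
    (u w : Fin n → ℝ) :
    (u ⬝ᵥ P.mulVec w) ^ 2 ≤ (u ⬝ᵥ P.mulVec u) * (w ⬝ᵥ P.mulVec w) := by
  have key : ∀ r : ℝ, 0 ≤ (w ⬝ᵥ P.mulVec w) * (r * r) + (2 * (u ⬝ᵥ P.mulVec w)) * r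
      + u ⬝ᵥ P.mulVec u := by
    intro r
    have h := psd_nonneg hP (u + r • w)
    have expand : (u + r • w) ⬝ᵥ P.mulVec (u + r • w)
        = (w ⬝ᵥ P.mulVec w) * (r * r) + (2 * (u ⬝ᵥ P.mulVec w)) * r + u ⬝ᵥ P.mulVec u := by
      rw [mulVec_add, dotProduct_add, add_dotProduct, add_dotProduct, mulVec_smul,
        dotProduct_smul, smul_dotProduct, smul_dotProduct, dotProduct_smul,
        psd_sym hP.isHermitian w u]
      simp [smul_eq_mul]; ring
    linarith [expand ▸ h]
  have hd := discrim_le_zero key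
  rw [discrim] at hd
  nlinarith

lemma rayleigh_min {n : ℕ} [NeZero n] {P : Matrix (Fin n) (Fin n) ℝ} (hP : P.PosDef)
    (v : Fin n → ℝ) :
    (⨅ i, hP.1.eigenvalues i) * (v ⬝ᵥ v) ≤ v ⬝ᵥ P.mulVec v := by
  classical
  set U : Matrix (Fin n) (Fin n) ℝ := (hP.1.eigenvectorUnitary : Matrix (Fin n) (Fin n) ℝ) with hU
  have hUt : v ᵥ* U = (star U).mulVec v := by
    rw [← mulVec_transpose, ← conjTranspose_eq_transpose_of_trivial]; rfl
  have hUU : U * star U = 1 := (Matrix.mem_unitaryGroup_iff).mp hP.1.eigenvectorUnitary.2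
  set w : Fin n → ℝ := (star U).mulVec v with hw
  set lam : Fin n → ℝ := hP.1.eigenvalues with hlam
  have hD : (RCLike.ofReal ∘ lam : Fin n → ℝ) = lam := by funext i; simp
  have hquad : v ⬝ᵥ P.mulVec v = ∑ i, lam i * (w i) ^ 2 := by
    conv_lhs => rw [hP.1.spectral_theorem]
    rw [Unitary.conjStarAlgAut_apply]
    rw [← hU, hD, ← mulVec_mulVec, ← mulVec_mulVec, dotProduct_mulVec v U, hUt, ← hw]
    simp [mulVec_diagonal, dotProduct]
    exact Finset.sum_congr rfl fun i _ => by ring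
  have hnorm : v ⬝ᵥ v = ∑ i, (w i) ^ 2 := by
    have h1 : v ⬝ᵥ v = v ⬝ᵥ (U * star U).mulVec v := by rw [hUU]; simp
    rw [h1, ← mulVec_mulVec, dotProduct_mulVec v U, hUt, ← hw]
    simp [dotProduct]
    exact Finset.sum_congr rfl fun i _ => by ring
  have hinf : ∀ i, (⨅ j, lam j) ≤ lam i := fun i =>
    ciInf_le (Set.Finite.bddBelow (Set.finite_range _)) i
  rw [hquad, hnorm, Finset.mul_sum]
  exact Finset.sum_le_sum fun i _ => mul_le_mul_of_nonneg_right (hinf i) (sq_nonneg _)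

lemma hasDerivAt_dot {n : ℕ} {x : ℝ → Fin n → ℝ} {v : Fin n → ℝ} {t : ℝ}
    (h : HasDerivAt x v t) (C : Fin n → ℝ) :
    HasDerivAt (fun s => C ⬝ᵥ x s) (C ⬝ᵥ v) t := by
  simp only [dotProduct]
  exact HasDerivAt.fun_sum fun i _ => ((hasDerivAt_pi.1 h) i).const_mul (C i)

lemma hasDerivAt_quad {n : ℕ} (P : Matrix (Fin n) (Fin n) ℝ) {e : ℝ → Fin n → ℝ}
    {v : Fin n → ℝ} {t : ℝ} (h : HasDerivAt e v t) :
    HasDerivAt (fun s => e s ⬝ᵥ P.mulVec (e s))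
      (v ⬝ᵥ P.mulVec (e t) + e t ⬝ᵥ P.mulVec v) t := by
  have comp : ∀ i, HasDerivAt (fun s => e s i) (v i) t := hasDerivAt_pi.1 h
  have hterm : ∀ i : Fin n, HasDerivAt (fun s => e s i * ∑ j, P i j * e s j)
      (v i * (∑ j, P i j * e t j) + e t i * (∑ j, P i j * v j)) t := fun i =>
    (comp i).mul (HasDerivAt.fun_sum fun j _ => (comp j).const_mul (P i j))
  have := HasDerivAt.fun_sum (fun i (_ : i ∈ Finset.univ) => hterm i)
  simp only [dotProduct, mulVec] at *
  refine this.congr_deriv ?_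
  rw [Finset.sum_add_distrib]

lemma lip_of_deriv {f f' : ℝ → ℝ} {Ly : ℝ}
    (hf : ∀ t, HasDerivAt f (f' t) t) (hb : ∀ t ≥ (0:ℝ), |f' t| ≤ Ly)
    {s t : ℝ} (hs : 0 ≤ s) (hst : s ≤ t) : |f t - f s| ≤ Ly * (t - s) := by
  have := norm_image_sub_le_of_norm_deriv_le_segment'
    (f := f) (f' := f') (a := s) (b := t) (C := Ly)
    (fun u hu => (hf u).hasDerivWithinAt)
    (fun u hu => by rw [Real.norm_eq_abs]; exact hb u (le_trans hs hu.1))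
    t (Set.right_mem_Icc.2 hst)
  simpa [Real.norm_eq_abs] using this

lemma gronwall_exp {f f' : ℝ → ℝ} {k S : ℝ}
    (hf : ∀ t, HasDerivAt f (f' t) t)
    (hle : ∀ t ≥ (0:ℝ), f' t ≤ -k * (f t - S)) :
    ∀ t ≥ (0:ℝ), f t ≤ S + (f 0 - S) * Real.exp (-k * t) := by
  set g : ℝ → ℝ := fun t => (f t - S) * Real.exp (k * t) with hg
  have hg' : ∀ t, HasDerivAt g ((f' t + k * (f t - S)) * Real.exp (k * t)) t := by
    intro t
    have h1 : HasDerivAt (fun t => f t - S) (f' t) t := (hf t).sub_const S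
    have h2 : HasDerivAt (fun t => Real.exp (k * t)) (k * Real.exp (k * t)) t := by
      have := (Real.hasDerivAt_exp (k * t)).comp t ((hasDerivAt_id t).const_mul k)
      exact this.congr_deriv (by ring)
    have := h1.mul h2
    exact this.congr_deriv (by ring)
  have hanti : AntitoneOn g (Set.Ici 0) := by
    apply antitoneOn_of_deriv_nonpos (convex_Ici 0)
    · exact fun u _ => ((hg' u).continuousAt).continuousWithinAt
    · exact fun u _ => ((hg' u).differentiableAt).differentiableWithinAt
    · intro u hu
      rw [interior_Ici] at hu
      rw [(hg' u).deriv]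
      have := hle u (le_of_lt hu)
      have hexp : 0 < Real.exp (k * u) := Real.exp_pos _
      nlinarith
  intro t ht
  have h0 := hanti (Set.self_mem_Ici) ht ht
  have hg0 : g 0 = f 0 - S := by simp [hg]
  have hgt : g t = (f t - S) * Real.exp (k * t) := rfl
  rw [hg0, hgt] at h0
  have hexp : 0 < Real.exp (k * t) := Real.exp_pos _
  have h2 : f t - S ≤ (f 0 - S) * Real.exp (-k * t) := by
    rw [neg_mul, Real.exp_neg, ← div_eq_mul_inv, le_div_iff₀ hexp]
    exact h0
  linarith

lemma coder_step_bound {d M : ℝ} (hM : 0 < M) (h : |d| ≤ 2 * M) :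
    |d - M * (if 0 ≤ d then (1:ℝ) else -1)| ≤ M := by
  rcases abs_le.mp h with ⟨h1, h2⟩
  split_ifs with h0 <;> rw [abs_le] <;> constructor <;> linarith

lemma vecMulVec_mulVec' {n : ℕ} (B C e : Fin n → ℝ) :
    (vecMulVec B C).mulVec e = (C ⬝ᵥ e) • B := by
  funext i
  simp [vecMulVec, mulVec, dotProduct, Finset.mul_sum, mul_assoc]
  rw [Finset.sum_mul]
  exact Finset.sum_congr rfl fun j _ => by ring

lemma limsup_core {μ b lmin : ℝ} (hμ : 0 < μ) (hb0 : 0 ≤ b) (hlmin : 0 < lmin)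
    {V V' f : ℝ → ℝ}
    (hVD : ∀ t, HasDerivAt V (V' t) t) (hVnn : ∀ t, 0 ≤ V t)
    (hub : ∀ t ≥ (0:ℝ), V' t ≤ -μ * V t + b * Real.sqrt (V t))
    (hf0 : ∀ t, 0 ≤ f t)
    (hfle : ∀ t, f t ≤ Real.sqrt (V t) / Real.sqrt lmin) :
    limsup f atTop ≤ b / (μ * Real.sqrt lmin) := by
  set S : ℝ := b ^ 2 / μ ^ 2 with hS
  have hS0 : 0 ≤ S := div_nonneg (sq_nonneg _) (sq_nonneg _)
  have hS2 : μ ^ 2 * S = b ^ 2 := by rw [hS]; field_simp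
  have hub' : ∀ t ≥ (0:ℝ), V' t ≤ -(μ/2) * (V t - S) := by
    intro t ht
    have h1 := hub t ht
    have hs := Real.sq_sqrt (hVnn t)
    nlinarith [sq_nonneg (b - μ * Real.sqrt (V t)), Real.sqrt_nonneg (V t), hμ.le, hS2]
  have hGr := gronwall_exp hVD hub'
  have hsl : 0 < Real.sqrt lmin := Real.sqrt_pos.2 hlmin
  have hev : ∀ ε > (0:ℝ), ∀ᶠ t in atTop, f t ≤ Real.sqrt (S + ε) / Real.sqrt lmin := by
    intro ε hε
    have hexp : Tendsto (fun t : ℝ => (V 0 - S) * Real.exp (-(μ/2) * t)) atTop (nhds 0) := by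
      have h2 : Tendsto (fun t : ℝ => Real.exp (-(μ/2) * t)) atTop (nhds 0) := by
        have h3 : Tendsto (fun t : ℝ => μ/2 * t) atTop atTop := by
          exact Tendsto.const_mul_atTop (by linarith) tendsto_id
        have h4 : Tendsto (fun t : ℝ => -(μ/2 * t)) atTop atBot :=
          tendsto_neg_atTop_atBot.comp h3
        have h5 := Real.tendsto_exp_atBot.comp h4
        exact h5.congr fun t => by show Real.exp (-(μ/2*t)) = _; rw [neg_mul]
      simpa using h2.const_mul (V 0 - S)
    have hev2 : ∀ᶠ t in atTop, (V 0 - S) * Real.exp (-(μ/2) * t) < ε :=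
      hexp.eventually_lt_const hε
    filter_upwards [hev2, eventually_ge_atTop (0:ℝ)] with t h1 h2
    have hVt : V t ≤ S + ε := le_trans (hGr t h2) (by linarith)
    calc f t ≤ Real.sqrt (V t) / Real.sqrt lmin := hfle t
      _ ≤ Real.sqrt (S + ε) / Real.sqrt lmin := by
          gcongr
  have hcobdd : IsCoboundedUnder (· ≤ ·) atTop f :=
    IsBoundedUnder.isCoboundedUnder_le ⟨0, eventually_map.2 (Eventually.of_forall hf0)⟩
  set T := limsup f atTop with hT
  have hTb : ∀ ε > (0:ℝ), T ≤ Real.sqrt (S + ε) / Real.sqrt lmin := fun ε hε =>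
    limsup_le_of_le hcobdd (hev ε hε)
  have hgoal : b / (μ * Real.sqrt lmin) = Real.sqrt S / Real.sqrt lmin := by
    rw [hS, Real.sqrt_div (sq_nonneg b), Real.sqrt_sq hb0, Real.sqrt_sq hμ.le, div_div]
  rw [hgoal]
  rcases le_or_gt T 0 with hT0 | hT0
  · exact le_trans hT0 (div_nonneg (Real.sqrt_nonneg _) hsl.le)
  · have h1 : ∀ ε > (0:ℝ), (T * Real.sqrt lmin) ^ 2 ≤ S + ε := by
      intro ε hε
      have h2 := (le_div_iff₀ hsl).1 (hTb ε hε)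
      have h3 : (T * Real.sqrt lmin) ^ 2 ≤ Real.sqrt (S + ε) ^ 2 :=
        pow_le_pow_left₀ (by positivity) h2 2
      rwa [Real.sq_sqrt (by linarith)] at h3
    have h3 : (T * Real.sqrt lmin) ^ 2 ≤ S := le_of_forall_pos_le_add h1
    have h4 : T * Real.sqrt lmin ≤ Real.sqrt S := by
      calc T * Real.sqrt lmin = Real.sqrt ((T * Real.sqrt lmin) ^ 2) :=
            (Real.sqrt_sq (by positivity)).symm
        _ ≤ Real.sqrt S := Real.sqrt_le_sqrt h3
    exact (le_div_iff₀ hsl).2 h4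

lemma coder_track {y ybar : ℝ → ℝ} {c : ℕ → ℝ} {Ly Ts M : ℝ}
    (hTs : 0 < Ts) (hM : 0 < M) (hLT : Ly * Ts ≤ M) (hLy0 : 0 ≤ Ly)
    (hlip : ∀ s t : ℝ, 0 ≤ s → s ≤ t → |y t - y s| ≤ Ly * (t - s))
    (hy0 : |y 0| ≤ 2 * M)
    (hc0 : c 0 = 0)
    (hc : ∀ k : ℕ, c (k + 1) = c k + M * (if 0 ≤ y (k * Ts) - c k then (1:ℝ) else -1))
    (hybar : ∀ k : ℕ, ∀ t ∈ Set.Ico ((k:ℝ) * Ts) ((k + 1 : ℝ) * Ts),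
      ybar t = c k + M * (if 0 ≤ y (k * Ts) - c k then (1:ℝ) else -1)) :
    ∀ t ≥ (0:ℝ), |y t - ybar t| ≤ 2 * M := by
  have hcb : ∀ k : ℕ, |y ((k:ℝ) * Ts) - c k| ≤ 2 * M := by
    intro k
    induction k with
    | zero => simpa [hc0] using hy0
    | succ k ih =>
      have hkn : (0:ℝ) ≤ (k:ℝ) * Ts := mul_nonneg (Nat.cast_nonneg k) hTs.le
      have hstep : |y ((k:ℝ) * Ts) - c (k + 1)| ≤ M := by
        rw [hc k, ← sub_sub]
        exact coder_step_bound hM ih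
      have hcast : (((k+1 : ℕ)):ℝ) * Ts = ((k:ℝ)+1) * Ts := by push_cast; ring
      have hlipk : |y ((((k+1):ℕ):ℝ) * Ts) - y ((k:ℝ)*Ts)| ≤ Ly * Ts := by
        have h1 := hlip ((k:ℝ)*Ts) (((k:ℝ)+1)*Ts) hkn (by nlinarith)
        have h2 : ((k:ℝ)+1)*Ts - (k:ℝ)*Ts = Ts := by ring
        rw [h2] at h1
        rw [hcast]
        exact h1
      calc |y ((((k+1):ℕ):ℝ) * Ts) - c (k+1)|
          ≤ |y ((((k+1):ℕ):ℝ)*Ts) - y ((k:ℝ)*Ts)| + |y ((k:ℝ)*Ts) - c (k+1)| :=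
            abs_sub_le _ _ _
        _ ≤ Ly*Ts + M := add_le_add hlipk hstep
        _ ≤ 2*M := by linarith
  have hstepA : ∀ k : ℕ, |y ((k:ℝ) * Ts) - c (k+1)| ≤ M := fun k => by
    rw [hc k, ← sub_sub]
    exact coder_step_bound hM (hcb k)
  intro t ht
  set k : ℕ := ⌊t / Ts⌋₊ with hk
  have hk1 : (k:ℝ) * Ts ≤ t := by
    rw [← le_div_iff₀ hTs]
    exact Nat.floor_le (div_nonneg ht hTs.le)
  have hk2 : t < ((k:ℝ) + 1) * Ts := by
    rw [← div_lt_iff₀ hTs]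
    exact Nat.lt_floor_add_one _
  have hyb : ybar t = c (k+1) := by
    rw [hybar k t ⟨hk1, hk2⟩, hc k]
  have hkn : (0:ℝ) ≤ (k:ℝ) * Ts := mul_nonneg (Nat.cast_nonneg k) hTs.le
  calc |y t - ybar t| = |y t - c (k+1)| := by rw [hyb]
    _ ≤ |y t - y ((k:ℝ)*Ts)| + |y ((k:ℝ)*Ts) - c (k+1)| := abs_sub_le _ _ _
    _ ≤ Ly * (t - (k:ℝ)*Ts) + M := add_le_add (hlip _ _ hkn hk1) (hstepA k)
    _ ≤ Ly * Ts + M := by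
        have h5 : t - (k:ℝ)*Ts ≤ Ts := by nlinarith
        have := mul_le_mul_of_nonneg_left h5 hLy0
        linarith
    _ ≤ 2*M := by linarith

lemma lmin_pos {n : ℕ} [NeZero n] {P : Matrix (Fin n) (Fin n) ℝ} (hP : P.PosDef) :
    0 < ⨅ i, hP.1.eigenvalues i := by
  haveI : Nonempty (Fin n) := Fin.pos_iff_nonempty.1 (Nat.pos_of_ne_zero (NeZero.ne n))
  obtain ⟨i, hi⟩ := exists_eq_ciInf_of_finite (f := hP.1.eigenvalues)
  rw [← hi]
  exact hP.eigenvalues_pos i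



/-- Controlled synchronization under information constraints: with the master
output transmitted through a first-order binary coder of range `M` and sampling
time `T_s` (transmission rate `R = 1/T_s` bit/s) satisfying `L_y·T_s ≤ M`, the
limit synchronization error obeys
`limsup ‖z − x‖ ≤ 4M(|K|+L)√(BᵀPB)/(μ√(λ_min(P)))`; for the minimal admissible
range `M = L_y·T_s = L_y/R` this bound equals
`4(|K|+L)√(BᵀPB)·L_y/(μ√(λ_min(P))·R)`, i.e. it is proportional to the maximal
rate `L_y` of the coupling signal and inversely proportional to the
transmission rate `R`. -/
theorem controlled_sync_under_information_constraints {n : ℕ}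
    (A : Matrix (Fin n) (Fin n) ℝ) (B C : Fin n → ℝ)
    (φ : ℝ → ℝ) (L : ℝ) (hL : 0 ≤ L)
    (hφ : ∀ y y' : ℝ, |φ y - φ y'| ≤ L * |y - y'|)
    (P : Matrix (Fin n) (Fin n) ℝ) (μ K : ℝ)
    (hP : P.PosDef) (hμ : 0 < μ)
    (hLyap : ∀ v : Fin n → ℝ,
      v ⬝ᵥ (P * (A - K • vecMulVec B C) + (A - K • vecMulVec B C)ᵀ * P).mulVec v
        ≤ -μ * (v ⬝ᵥ P.mulVec v))
    (hPB : P.mulVec B = C)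
    (Ly Ts M : ℝ) (hTs : 0 < Ts) (hM : 0 < M) (hLT : Ly * Ts ≤ M)
    (x : ℝ → Fin n → ℝ)
    (hx : ∀ t : ℝ, HasDerivAt x (A.mulVec (x t) + φ (C ⬝ᵥ x t) • B) t)
    (hrate : ∀ t ≥ (0 : ℝ), |deriv (fun s => C ⬝ᵥ x s) t| ≤ Ly)
    (hy0 : |C ⬝ᵥ x 0| ≤ 2 * M)
    (c : ℕ → ℝ) (hc0 : c 0 = 0)
    (hc : ∀ k : ℕ, c (k + 1)
      = c k + M * (if 0 ≤ C ⬝ᵥ x (k * Ts) - c k then (1 : ℝ) else -1))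
    (ybar : ℝ → ℝ)
    (hybar : ∀ k : ℕ, ∀ t ∈ Set.Ico ((k : ℝ) * Ts) ((k + 1 : ℝ) * Ts),
      ybar t = c k + M * (if 0 ≤ C ⬝ᵥ x (k * Ts) - c k then (1 : ℝ) else -1))
    (z : ℝ → Fin n → ℝ)
    (hz : ∀ t : ℝ, HasDerivAt z
      (A.mulVec (z t) + φ (C ⬝ᵥ z t) • B
        + (-((K + L) * (C ⬝ᵥ z t - ybar t))) • B) t) :
    limsup (fun t => Real.sqrt (∑ i, (z t i - x t i) ^ 2)) atTop
      ≤ 4 * M * (|K| + L) * Real.sqrt (B ⬝ᵥ P.mulVec B)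
        / (μ * Real.sqrt (⨅ i, hP.1.eigenvalues i))
    ∧ (M = Ly * Ts →
        4 * M * (|K| + L) * Real.sqrt (B ⬝ᵥ P.mulVec B)
            / (μ * Real.sqrt (⨅ i, hP.1.eigenvalues i))
          = 4 * (|K| + L) * Real.sqrt (B ⬝ᵥ P.mulVec B) * Ly
            / (μ * Real.sqrt (⨅ i, hP.1.eigenvalues i) * (1 / Ts))) := by
  have hKL : 0 ≤ |K| + L := add_nonneg (abs_nonneg _) hL
  have hsB : 0 ≤ Real.sqrt (B ⬝ᵥ P.mulVec B) := Real.sqrt_nonneg _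
  have hsl : 0 ≤ Real.sqrt (⨅ i, hP.1.eigenvalues i) := Real.sqrt_nonneg _
  constructor
  · -- main limsup bound
    by_cases hn : n = 0
    · subst hn
      have : (fun t => Real.sqrt (∑ i : Fin 0, (z t i - x t i) ^ 2)) = fun _ => (0:ℝ) := by
        funext t; simp
      rw [this, limsup_const]
      apply div_nonneg _ (mul_nonneg hμ.le hsl)
      have : (0:ℝ) ≤ 4 * M := by linarith
      exact mul_nonneg (mul_nonneg this hKL) hsB
    · haveI : NeZero n := ⟨hn⟩
      -- output Lipschitz property
      have hy' : ∀ t, HasDerivAt (fun s => C ⬝ᵥ x s)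
          (C ⬝ᵥ (A.mulVec (x t) + φ (C ⬝ᵥ x t) • B)) t :=
        fun t => hasDerivAt_dot (hx t) C
      have hLy0 : 0 ≤ Ly := le_trans (abs_nonneg _) (hrate 0 le_rfl)
      have hlip : ∀ s t : ℝ, 0 ≤ s → s ≤ t → |C ⬝ᵥ x t - C ⬝ᵥ x s| ≤ Ly * (t - s) := by
        intro s t hs hst
        refine lip_of_deriv hy' ?_ hs hst
        intro u hu
        have h1 := hrate u hu
        rwa [(hy' u).deriv] at h1
      have hdel : ∀ t ≥ (0:ℝ), |C ⬝ᵥ x t - ybar t| ≤ 2 * M :=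
        coder_track hTs hM hLT hLy0 hlip hy0 hc0 hc hybar
      -- error dynamics
      set e : ℝ → Fin n → ℝ := fun t => z t - x t with he
      set ψ : ℝ → ℝ := fun t =>
        φ (C ⬝ᵥ z t) - φ (C ⬝ᵥ x t) - (K + L) * (C ⬝ᵥ z t - ybar t) with hψ
      set e' : ℝ → Fin n → ℝ := fun t => A.mulVec (e t) + ψ t • B with he'
      have heD : ∀ t, HasDerivAt e (e' t) t := by
        intro t
        have h := HasDerivAt.sub (hz t) (hx t)
        have heq : e' t = (A.mulVec (z t) + φ (C ⬝ᵥ z t) • B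
            + (-((K + L) * (C ⬝ᵥ z t - ybar t))) • B)
            - (A.mulVec (x t) + φ (C ⬝ᵥ x t) • B) := by
          simp only [he', he, hψ]
          rw [mulVec_sub]
          funext i
          simp only [Pi.add_apply, Pi.sub_apply, Pi.smul_apply, Pi.neg_apply, smul_eq_mul]
          ring
        rw [heq]
        simp only [he]
        exact h
      set V : ℝ → ℝ := fun t => e t ⬝ᵥ P.mulVec (e t) with hV
      set V' : ℝ → ℝ := fun t => 2 * (e t ⬝ᵥ P.mulVec (e' t)) with hV'
      have hVD : ∀ t, HasDerivAt V (V' t) t := by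
        intro t
        have h := hasDerivAt_quad P (heD t)
        rw [psd_sym hP.1 (e' t) (e t), ← two_mul] at h
        exact h
      have hVnn : ∀ t, 0 ≤ V t := fun t => psd_nonneg hP.posSemidef (e t)
      set σ : ℝ → ℝ := fun t => C ⬝ᵥ e t with hσ
      have hσz : ∀ t, C ⬝ᵥ z t - C ⬝ᵥ x t = σ t := by
        intro t
        simp only [hσ, he, dotProduct_sub]
      have hePB : ∀ t, e t ⬝ᵥ P.mulVec B = σ t := by
        intro t
        rw [hPB]
        simp only [hσ, dotProduct_comm]
      set b : ℝ := 4 * M * (|K| + L) * Real.sqrt (B ⬝ᵥ P.mulVec B) with hb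
      have hb0 : 0 ≤ b := by
        rw [hb]
        have h4M : (0:ℝ) ≤ 4 * M := by linarith
        exact mul_nonneg (mul_nonneg h4M hKL) hsB
      have hub : ∀ t ≥ (0:ℝ), V' t ≤ -μ * V t + b * Real.sqrt (V t) := by
        intro t ht
        have hA' : (A - K • vecMulVec B C).mulVec (e t)
            = A.mulVec (e t) - (K * σ t) • B := by
          rw [sub_mulVec, smul_mulVec, vecMulVec_mulVec', smul_smul]
        have h0 := hLyap (e t)
        rw [add_mulVec, dotProduct_add, ← mulVec_mulVec,
          dotProduct_mulVec (e t) ((A - K • vecMulVec B C)ᵀ * P), ← vecMul_vecMul,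
          vecMul_transpose, ← dotProduct_mulVec,
          psd_sym hP.1 ((A - K • vecMulVec B C).mulVec (e t)) (e t),
          hA', mulVec_sub, dotProduct_sub, mulVec_smul, dotProduct_smul,
          hePB t, smul_eq_mul] at h0
        have hEe' : e t ⬝ᵥ P.mulVec (e' t)
            = e t ⬝ᵥ P.mulVec (A.mulVec (e t)) + ψ t * σ t := by
          simp only [he']
          rw [mulVec_add, dotProduct_add, mulVec_smul, dotProduct_smul, hePB t, smul_eq_mul]
        have hphi := hφ (C ⬝ᵥ z t) (C ⬝ᵥ x t)
        rw [hσz t] at hphi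
        have hdelt := hdel t ht
        have hsp : C ⬝ᵥ z t - ybar t = σ t + (C ⬝ᵥ x t - ybar t) := by
          rw [← hσz t]; ring
        have habs1 : (φ (C ⬝ᵥ z t) - φ (C ⬝ᵥ x t)) * σ t ≤ L * σ t ^ 2 := by
          calc (φ (C ⬝ᵥ z t) - φ (C ⬝ᵥ x t)) * σ t
              ≤ |φ (C ⬝ᵥ z t) - φ (C ⬝ᵥ x t)| * |σ t| := by
                rw [← abs_mul]; exact le_abs_self _
            _ ≤ (L * |σ t|) * |σ t| := mul_le_mul_of_nonneg_right hphi (abs_nonneg _)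
            _ = L * σ t ^ 2 := by rw [mul_assoc, abs_mul_abs_self]; ring
        have habs2 : -((K + L) * ((C ⬝ᵥ x t - ybar t) * σ t))
            ≤ (|K| + L) * (2 * M) * |σ t| := by
          calc -((K + L) * ((C ⬝ᵥ x t - ybar t) * σ t))
              ≤ |(K + L) * ((C ⬝ᵥ x t - ybar t) * σ t)| := neg_le_abs _
            _ = |K + L| * (|C ⬝ᵥ x t - ybar t| * |σ t|) := by rw [abs_mul, abs_mul]
            _ ≤ (|K| + L) * ((2 * M) * |σ t|) := by
                apply mul_le_mul
                · calc |K + L| ≤ |K| + |L| := abs_add_le _ _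
                    _ = |K| + L := by rw [abs_of_nonneg hL]
                · exact mul_le_mul_of_nonneg_right hdelt (abs_nonneg _)
                · exact mul_nonneg (abs_nonneg _) (abs_nonneg _)
                · exact hKL
            _ = (|K| + L) * (2 * M) * |σ t| := by ring
        have hψσ : ψ t * σ t = (φ (C ⬝ᵥ z t) - φ (C ⬝ᵥ x t)) * σ t
            - (K + L) * σ t ^ 2 - ((K + L) * ((C ⬝ᵥ x t - ybar t) * σ t)) := by
          simp only [hψ]
          rw [hsp]; ring
        have hσb : |σ t| ≤ Real.sqrt (V t) * Real.sqrt (B ⬝ᵥ P.mulVec B) := by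
          have hcs := psd_cs hP.posSemidef (e t) B
          rw [hePB t] at hcs
          calc |σ t| = Real.sqrt (σ t ^ 2) := (Real.sqrt_sq_eq_abs _).symm
            _ ≤ Real.sqrt ((e t ⬝ᵥ P.mulVec (e t)) * (B ⬝ᵥ P.mulVec B)) :=
                Real.sqrt_le_sqrt hcs
            _ = Real.sqrt (V t) * Real.sqrt (B ⬝ᵥ P.mulVec B) := by
                rw [Real.sqrt_mul (psd_nonneg hP.posSemidef _)]
        have h2M : (2 * ((|K| + L) * (2 * M))) * |σ t| ≤ b * Real.sqrt (V t) := by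
          have hM' : (0:ℝ) ≤ 2 * M := by linarith
          have hnn : (0:ℝ) ≤ 2 * ((|K| + L) * (2 * M)) :=
            mul_nonneg (by norm_num) (mul_nonneg hKL hM')
          calc (2 * ((|K| + L) * (2 * M))) * |σ t|
              ≤ (2 * ((|K| + L) * (2 * M)))
                * (Real.sqrt (V t) * Real.sqrt (B ⬝ᵥ P.mulVec B)) :=
                mul_le_mul_of_nonneg_left hσb hnn
            _ = b * Real.sqrt (V t) := by rw [hb]; ring
        have hsq : σ t ^ 2 = σ t * σ t := sq (σ t) ▸ rfl
        have hV't : V' t = 2 * (e t ⬝ᵥ P.mulVec (e' t)) := rfl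
        rw [hV't, hEe']
        have hVt : V t = e t ⬝ᵥ P.mulVec (e t) := rfl
        rw [hVt] at *
        nlinarith [h0, habs1, habs2, hψσ, h2M]
      -- conclude via core lemma
      set lmin : ℝ := ⨅ i, hP.1.eigenvalues i with hlm
      have hlmin : 0 < lmin := lmin_pos hP
      have hfle : ∀ t, Real.sqrt (∑ i, (z t i - x t i) ^ 2)
          ≤ Real.sqrt (V t) / Real.sqrt lmin := by
        intro t
        have h1 : (∑ i, (z t i - x t i) ^ 2) = e t ⬝ᵥ e t := by
          simp [he, dotProduct, pow_two]
        have h2 : lmin * (e t ⬝ᵥ e t) ≤ V t := rayleigh_min hP (e t)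
        have hsl' : 0 < Real.sqrt lmin := Real.sqrt_pos.2 hlmin
        rw [h1]
        calc Real.sqrt (e t ⬝ᵥ e t) ≤ Real.sqrt (V t / lmin) := by
              apply Real.sqrt_le_sqrt
              rw [le_div_iff₀ hlmin]
              linarith
          _ = Real.sqrt (V t) / Real.sqrt lmin := Real.sqrt_div (hVnn t) _
      exact limsup_core hμ hb0 hlmin hVD hVnn hub
        (fun t => Real.sqrt_nonneg _) hfle
  · -- algebraic identity
    intro hMeq
    subst hMeq
    rw [show μ * Real.sqrt (⨅ i, hP.1.eigenvalues i) * (1 / Ts)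
        = (μ * Real.sqrt (⨅ i, hP.1.eigenvalues i)) / Ts by ring,
      div_div_eq_mul_div]
    congr 1
    ring
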